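/- If a sequence (x^k) in a real Hilbert space H is quasi-Fejér convergent to a nonempty set S, and every weak cluster point of (x^k) belongs to S, then (x^k) converges weakly. -/

import Mathlib

set_option linter.unnecessarySimpa false


open RealInnerProductSpace

/-- Quasi-Fejér convergence of a sequence to a set `S`. -/
def QuasiFejer {H : Type*} [NormedAddCommGroup H] [InnerProductSpace ℝ H]
    (x : ℕ → H) (S : Set H) : Prop :=
  ∀ p ∈ S, ∃ k₀ : ℕ, ∃ δ : ℕ → ℝ, (∀ k, 0 ≤ δ k) ∧ Summable δ ∧
    ∀ k ≥ k₀, ‖x (k + 1) - p‖ ^ 2 ≤ ‖x k - p‖ ^ 2 + δ k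

/-- `l` is the weak limit of the sequence `x` (in a real Hilbert space,
weak convergence tested against all vectors via the inner product). -/
def WeakLimit {H : Type*} [NormedAddCommGroup H] [InnerProductSpace ℝ H]
    (x : ℕ → H) (l : H) : Prop :=
  ∀ y : H, Filter.Tendsto (fun k => ⟪x k - l, y⟫) Filter.atTop (nhds 0)

open Filter

lemma lemA {H : Type*} [NormedAddCommGroup H] [InnerProductSpace ℝ H]
    {x : ℕ → H} {S : Set H} (hx : QuasiFejer x S) {p : H} (hp : p ∈ S) :
    ∃ L, Tendsto (fun k => ‖x k - p‖ ^ 2) atTop (nhds L) := by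
  obtain ⟨k₀, δ, hδ0, hδs, hfe⟩ := hx p hp
  set t : ℕ → ℝ := fun i => ∑' j, δ (j + i) with ht
  have hts : ∀ i, Summable fun j => δ (j + i) := fun i => (summable_nat_add_iff i).2 hδs
  have ht0 : Tendsto t atTop (nhds 0) := tendsto_sum_nat_add δ
  have hsplit : ∀ i, t i = δ i + t (i + 1) := by
    intro i
    have h1 : t i = δ (0 + i) + ∑' j, δ (j + 1 + i) := (hts i).tsum_eq_zero_add
    rw [h1, zero_add]
    congr 1
    exact tsum_congr fun j => by ring_nf
  have htnn : ∀ i, 0 ≤ t i := fun i => tsum_nonneg fun j => hδ0 _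
  set b : ℕ → ℝ := fun k => ‖x (k + k₀) - p‖ ^ 2 + t (k + k₀) with hb
  have hanti : Antitone b := by
    apply antitone_nat_of_succ_le
    intro k
    have h1 : ‖x (k + k₀ + 1) - p‖ ^ 2 ≤ ‖x (k + k₀) - p‖ ^ 2 + δ (k + k₀) :=
      hfe (k + k₀) (Nat.le_add_left _ _)
    have h2 : t (k + k₀) = δ (k + k₀) + t (k + k₀ + 1) := hsplit _
    have h3 : k + 1 + k₀ = k + k₀ + 1 := by omega
    simp only [hb, h3]
    linarith
  have hbdd : BddBelow (Set.range b) := by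
    refine ⟨0, ?_⟩
    rintro _ ⟨k, rfl⟩
    exact add_nonneg (by positivity) (htnn _)
  have hbL : Tendsto b atTop (nhds (⨅ i, b i)) := tendsto_atTop_ciInf hanti hbdd
  have ht' : Tendsto (fun k => t (k + k₀)) atTop (nhds 0) := ht0.comp (tendsto_add_atTop_nat k₀)
  have h4 : Tendsto (fun k => ‖x (k + k₀) - p‖ ^ 2) atTop (nhds ((⨅ i, b i) - 0)) := by
    have := hbL.sub ht'
    simpa [hb] using this
  exact ⟨_, (tendsto_add_atTop_iff_nat k₀).1 h4⟩

lemma bdd_of_lemA {H : Type*} [NormedAddCommGroup H] [InnerProductSpace ℝ H]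
    {x : ℕ → H} {p : H} {L : ℝ} (hL : Tendsto (fun k => ‖x k - p‖ ^ 2) atTop (nhds L)) :
    ∃ C : ℝ, ∀ k, ‖x k‖ ≤ C := by
  have h1 : Tendsto (fun k => ‖x k - p‖) atTop (nhds (Real.sqrt L)) := by
    have := (Real.continuous_sqrt.tendsto L).comp hL
    simpa [Function.comp_def, Real.sqrt_sq (norm_nonneg _)] using this
  obtain ⟨R, _, hR⟩ := cauchySeq_bdd h1.cauchySeq
  refine ⟨‖x 0 - p‖ + R + ‖p‖, fun k => ?_⟩
  have h2 : dist ‖x k - p‖ ‖x 0 - p‖ < R := hR k 0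
  rw [Real.dist_eq] at h2
  have h3 : ‖x k - p‖ - ‖x 0 - p‖ ≤ |‖x k - p‖ - ‖x 0 - p‖| := le_abs_self _
  calc ‖x k‖ = ‖x k - p + p‖ := by rw [sub_add_cancel]
    _ ≤ ‖x k - p‖ + ‖p‖ := norm_add_le _ _
    _ ≤ ‖x 0 - p‖ + R + ‖p‖ := by linarith

lemma weakBW {H : Type*} [NormedAddCommGroup H] [InnerProductSpace ℝ H] [CompleteSpace H]
    (z : ℕ → H) (C : ℝ) (hC : ∀ k, ‖z k‖ ≤ C) :
    ∃ φ : ℕ → ℕ, StrictMono φ ∧ ∃ l : H, WeakLimit (fun n => z (φ n)) l := by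
  -- Step 1: diagonal subsequence making all ⟪z (φ k), z j⟫ converge
  set s : Set (ℕ → ℝ) := Set.pi Set.univ (fun _ : ℕ => Set.Icc (-(C * C)) (C * C)) with hs
  have hscomp : IsCompact s := isCompact_univ_pi fun _ => isCompact_Icc
  set T : ℕ → (ℕ → ℝ) := fun k j => ⟪z k, z j⟫ with hT
  have hTs : ∀ k, T k ∈ s := by
    intro k
    intro j _
    have := abs_real_inner_le_norm (z k) (z j)
    have h2 : ‖z k‖ * ‖z j‖ ≤ C * C := by
      have h0 : (0:ℝ) ≤ ‖z k‖ := norm_nonneg _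
      have h0' : (0:ℝ) ≤ ‖z j‖ := norm_nonneg _
      exact mul_le_mul (hC k) (hC j) h0' (le_trans h0 (hC k))
    constructor <;> [linarith [abs_le.1 (le_trans this h2)]; linarith [(abs_le.1 (le_trans this h2)).2]]
  obtain ⟨a, -, φ, hφ, hconv⟩ := hscomp.tendsto_subseq hTs
  set w : ℕ → H := fun n => z (φ n) with hw
  have hconv' : ∀ j, Tendsto (fun k => ⟪w k, z j⟫) atTop (nhds (a j)) := by
    intro j
    have := tendsto_pi_nhds.1 hconv j
    exact this
  -- the set of y where the inner products converge
  set A : Submodule ℝ H :=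
    { carrier := {y : H | ∃ L : ℝ, Tendsto (fun k => ⟪w k, y⟫) atTop (nhds L)}
      add_mem' := by
        rintro u v ⟨Lu, hu⟩ ⟨Lv, hv⟩
        exact ⟨Lu + Lv, by simpa [inner_add_right] using hu.add hv⟩
      zero_mem' := ⟨0, by simpa using tendsto_const_nhds⟩
      smul_mem' := by
        rintro c u ⟨L, hL⟩
        exact ⟨c * L, by simpa [inner_smul_right] using hL.const_mul c⟩ } with hA
  have hzA : ∀ j, z j ∈ A := fun j => ⟨a j, hconv' j⟩
  have hAclosed : IsClosed (A : Set H) := by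
    refine isClosed_of_closure_subset ?_
    intro y hy
    have hcauchy : CauchySeq (fun k => ⟪w k, y⟫) := by
      rw [Metric.cauchySeq_iff]
      intro ε hε
      have hC1 : (0:ℝ) < C + 1 := by
        have := le_trans (norm_nonneg (z 0)) (hC 0); linarith
      obtain ⟨y', hy'A, hy'd⟩ := Metric.mem_closure_iff.1 hy (ε / (3 * (C + 1)))
        (by positivity)
      obtain ⟨L, hL⟩ := hy'A
      obtain ⟨N, hN⟩ := Metric.cauchySeq_iff.1 hL.cauchySeq (ε / 3) (by positivity)
      refine ⟨N, fun m hm n hn => ?_⟩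
      have key : ∀ k : ℕ, |⟪w k, y⟫ - ⟪w k, y'⟫| ≤ (C + 1) * (ε / (3 * (C + 1))) := by
        intro k
        have h1 : ⟪w k, y⟫ - ⟪w k, y'⟫ = ⟪w k, y - y'⟫ := (inner_sub_right _ _ _).symm
        rw [h1]
        calc |⟪w k, y - y'⟫| ≤ ‖w k‖ * ‖y - y'‖ := abs_real_inner_le_norm _ _
          _ ≤ (C + 1) * (ε / (3 * (C + 1))) := by
              apply mul_le_mul
              · exact le_trans (hC _) (by linarith)
              · rw [← dist_eq_norm]; exact le_of_lt hy'd
              · exact norm_nonneg _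
              · linarith
      have hcc : (C + 1) * (ε / (3 * (C + 1))) = ε / 3 := by field_simp
      have h2 := hN m hm n hn
      rw [Real.dist_eq] at h2 ⊢
      have e1 := key m
      have e2 := key n
      rw [hcc] at e1 e2
      have : ⟪w m, y⟫ - ⟪w n, y⟫ =
          (⟪w m, y⟫ - ⟪w m, y'⟫) + (⟪w m, y'⟫ - ⟪w n, y'⟫) + (⟪w n, y'⟫ - ⟪w n, y⟫) := by ring
      rw [this]
      calc |(⟪w m, y⟫ - ⟪w m, y'⟫) + (⟪w m, y'⟫ - ⟪w n, y'⟫) + (⟪w n, y'⟫ - ⟪w n, y⟫)|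
          ≤ |(⟪w m, y⟫ - ⟪w m, y'⟫) + (⟪w m, y'⟫ - ⟪w n, y'⟫)| + |⟪w n, y'⟫ - ⟪w n, y⟫| :=
            abs_add_le _ _
        _ ≤ |⟪w m, y⟫ - ⟪w m, y'⟫| + |⟪w m, y'⟫ - ⟪w n, y'⟫| + |⟪w n, y'⟫ - ⟪w n, y⟫| := by
            have := abs_add_le (⟪w m, y⟫ - ⟪w m, y'⟫) (⟪w m, y'⟫ - ⟪w n, y'⟫)
            linarith
        _ < ε := by
            have e2' : |⟪w n, y'⟫ - ⟪w n, y⟫| ≤ ε / 3 := by rw [abs_sub_comm]; exact e2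
            linarith
    obtain ⟨L, hL⟩ := cauchySeq_tendsto_of_complete hcauchy
    exact ⟨L, hL⟩
  -- K : closure of span of range z
  set K : Submodule ℝ H := (Submodule.span ℝ (Set.range z)).topologicalClosure with hK
  haveI : CompleteSpace K :=
    (Submodule.isClosed_topologicalClosure _).completeSpace_coe
  have hKA : K ≤ A := by
    apply Submodule.topologicalClosure_minimal
    · rw [Submodule.span_le]
      rintro _ ⟨j, rfl⟩
      exact hzA j
    · exact hAclosed
  have hwK : ∀ k, w k ∈ K := fun k =>
    Submodule.le_topologicalClosure _ (Submodule.subset_span ⟨φ k, rfl⟩)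
  -- every y has converging inner products
  have hlim : ∀ y : H, ∃ L : ℝ, Tendsto (fun k => ⟪w k, y⟫) atTop (nhds L) := by
    intro y
    set P : H := ((K.orthogonalProjectionOnto y) : H) with hP
    have hPA : P ∈ A := hKA ((K.orthogonalProjectionOnto y)).2
    obtain ⟨L, hL⟩ := hPA
    refine ⟨L, ?_⟩
    have heq : ∀ k, ⟪w k, y⟫ = ⟪w k, P⟫ := by
      intro k
      have horth : y - P ∈ Kᗮ := K.sub_starProjection_mem_orthogonal y
      have h0 : ⟪w k, y - P⟫ = 0 := (Submodule.mem_orthogonal K _).1 horth (w k) (hwK k)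
      have := inner_sub_right (𝕜 := ℝ) (w k) y P
      rw [h0] at this
      linarith
    simpa only [heq] using hL
  -- build the weak limit via Riesz
  choose g hg using hlim
  have hadd : ∀ u v : H, g (u + v) = g u + g v := by
    intro u v
    refine tendsto_nhds_unique (hg (u + v)) ?_
    simpa [inner_add_right] using (hg u).add (hg v)
  have hsmul : ∀ (c : ℝ) (u : H), g (c • u) = c * g u := by
    intro c u
    refine tendsto_nhds_unique (hg (c • u)) ?_
    simpa [inner_smul_right] using (hg u).const_mul c
  have hbound : ∀ y : H, |g y| ≤ C * ‖y‖ := by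
    intro y
    have h1 : Tendsto (fun k => |⟪w k, y⟫|) atTop (nhds |g y|) := (hg y).abs
    refine le_of_tendsto h1 (Eventually.of_forall fun k => ?_)
    calc |⟪w k, y⟫| ≤ ‖w k‖ * ‖y‖ := abs_real_inner_le_norm _ _
      _ ≤ C * ‖y‖ := mul_le_mul_of_nonneg_right (hC _) (norm_nonneg _)
  set glin : H →ₗ[ℝ] ℝ :=
    { toFun := g
      map_add' := hadd
      map_smul' := hsmul } with hglin
  set f : H →L[ℝ] ℝ := LinearMap.mkContinuous glin C (fun y => by
    rw [Real.norm_eq_abs]; exact hbound y) with hf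
  refine ⟨φ, hφ, (InnerProductSpace.toDual ℝ H).symm f, fun y => ?_⟩
  have hly : ⟪(InnerProductSpace.toDual ℝ H).symm f, y⟫ = g y := by
    rw [← InnerProductSpace.toDual_apply_apply]; simp [hf, hglin]
  have : Tendsto (fun k => ⟪w k, y⟫ - g y) atTop (nhds (g y - g y)) :=
    (hg y).sub tendsto_const_nhds
  rw [sub_self] at this
  convert this using 2 with k
  rw [inner_sub_left, hly]

theorem quasiFejer_weak_convergence
    {H : Type*} [NormedAddCommGroup H] [InnerProductSpace ℝ H] [CompleteSpace H]
    (S : Set H) (hS : S.Nonempty) (x : ℕ → H)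
    (hx : QuasiFejer x S)
    (hcluster : ∀ l : H, ∀ φ : ℕ → ℕ, StrictMono φ →
      WeakLimit (fun n => x (φ n)) l → l ∈ S) :
    ∃ l : H, WeakLimit x l := by
  obtain ⟨p, hp⟩ := hS
  obtain ⟨Lp, hLp⟩ := lemA hx hp
  obtain ⟨C, hC⟩ := bdd_of_lemA hLp
  obtain ⟨φ, hφ, l, hwl⟩ := weakBW x C hC
  have hlS : l ∈ S := hcluster l φ hφ hwl
  refine ⟨l, fun y => ?_⟩
  by_contra hcon
  rw [Metric.tendsto_atTop] at hcon
  push_neg at hcon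
  obtain ⟨ε, hε, hfreq⟩ := hcon
  have hfreq' : ∀ N, ∃ n ≥ N, ε ≤ |⟪x n - l, y⟫| := by
    intro N
    obtain ⟨n, hn, hn2⟩ := hfreq N
    exact ⟨n, hn, by rwa [Real.dist_eq, sub_zero] at hn2⟩
  obtain ⟨ψ, hψ, hψε⟩ := extraction_of_frequently_atTop (frequently_atTop.2 hfreq')
  obtain ⟨σ, hσ, l', hwl'⟩ := weakBW (fun k => x (ψ k)) C (fun k => hC _)
  have hl'S : l' ∈ S := hcluster l' (ψ ∘ σ) (hψ.comp hσ) hwl'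
  -- uniqueness of weak cluster points in S
  obtain ⟨Ll, hLl⟩ := lemA hx hlS
  obtain ⟨Ll', hLl'⟩ := lemA hx hl'S
  set D : ℝ := (Ll' - Ll - (‖l'‖ ^ 2 - ‖l‖ ^ 2)) / 2 with hD
  have key : Tendsto (fun k => ⟪x k, l - l'⟫) atTop (nhds D) := by
    have h1 := ((hLl'.sub hLl).sub_const (‖l'‖ ^ 2 - ‖l‖ ^ 2)).div_const 2
    convert h1 using 2 with k
    rw [inner_sub_right, norm_sub_sq_real, norm_sub_sq_real]
    ring
  have hDl : ⟪l, l - l'⟫ = D := by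
    have h2 := hwl (l - l')
    have h3 : Tendsto (fun n => ⟪x (φ n) - l, l - l'⟫ + ⟪l, l - l'⟫) atTop
        (nhds (0 + ⟪l, l - l'⟫)) := h2.add tendsto_const_nhds
    rw [zero_add] at h3
    have heq : (fun n => ⟪x (φ n) - l, l - l'⟫ + ⟪l, l - l'⟫)
        = fun n => ⟪x (φ n), l - l'⟫ := by
      funext n; rw [inner_sub_left]; ring
    rw [heq] at h3
    exact tendsto_nhds_unique h3 (key.comp hφ.tendsto_atTop)
  have hDl' : ⟪l', l - l'⟫ = D := by
    have h2 := hwl' (l - l')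
    have h3 : Tendsto (fun n => ⟪x (ψ (σ n)) - l', l - l'⟫ + ⟪l', l - l'⟫) atTop
        (nhds (0 + ⟪l', l - l'⟫)) := h2.add tendsto_const_nhds
    rw [zero_add] at h3
    have heq : (fun n => ⟪x (ψ (σ n)) - l', l - l'⟫ + ⟪l', l - l'⟫)
        = fun n => ⟪x (ψ (σ n)), l - l'⟫ := by
      funext n; rw [inner_sub_left]; ring
    rw [heq] at h3
    exact tendsto_nhds_unique h3 (key.comp (hψ.comp hσ).tendsto_atTop)
  have hll' : l = l' := by
    have h4 : ⟪l - l', l - l'⟫ = 0 := by rw [inner_sub_left, hDl, hDl']; ring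
    exact sub_eq_zero.1 (inner_self_eq_zero.1 h4)
  -- contradiction
  rw [← hll'] at hwl'
  have h6 := hwl' y
  rw [Metric.tendsto_atTop] at h6
  obtain ⟨N, hN⟩ := h6 ε hε
  have h7 := hN N le_rfl
  rw [Real.dist_eq, sub_zero] at h7
  exact absurd h7 (not_lt.2 (hψε (σ N)))
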